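/- Let σ ≤ τ with |τ| − |σ| = 2 in the permutation pattern poset. Then the interval [σ,τ] has exactly k elements of rank 1 (i.e., elements π with σ < π < τ), where k is the number of runs of τ consisting entirely of removable letters. -/

import Mathlib

open scoped Classical

/-- The set of all (finite) permutations, as patterns: a permutation of length `n`
together with its length. -/
abbrev PermPt := Σ n : ℕ, Equiv.Perm (Fin n)

/-- Pattern containment order: `σ` occurs in `τ` if there is a strictly monotone
choice of positions on which `τ` is order-isomorphic to `σ`. -/
def ple (σ τ : PermPt) : Prop :=
  ∃ f : Fin σ.1 → Fin τ.1, StrictMono f ∧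
    ∀ a b : Fin σ.1, σ.2 a ≤ σ.2 b ↔ τ.2 (f a) ≤ τ.2 (f b)

/-- Strict pattern containment. -/
def plt (σ τ : PermPt) : Prop := ple σ τ ∧ ¬ ple τ σ

/-- Direct sum of permutations. -/
def pds {m n : ℕ} (α : Equiv.Perm (Fin m)) (β : Equiv.Perm (Fin n)) :
    Equiv.Perm (Fin (m + n)) :=
  finSumFinEquiv.symm.trans ((Equiv.sumCongr α β).trans finSumFinEquiv)

/-- Skew sum of permutations. -/
def pss {m n : ℕ} (α : Equiv.Perm (Fin m)) (β : Equiv.Perm (Fin n)) :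
    Equiv.Perm (Fin (m + n)) :=
  finSumFinEquiv.symm.trans
    (((Equiv.sumCongr α β).trans (Equiv.sumComm (Fin m) (Fin n))).trans
      (finSumFinEquiv.trans (finCongr (Nat.add_comm n m))))

/-- Direct sum, as an operation on `PermPt`. -/
def pdsP (a b : PermPt) : PermPt := ⟨a.1 + b.1, pds a.2 b.2⟩

/-- Skew sum, as an operation on `PermPt`. -/
def pssP (a b : PermPt) : PermPt := ⟨a.1 + b.1, pss a.2 b.2⟩

/-- The empty permutation. -/
def pempty : PermPt := ⟨0, 1⟩

/-- The permutation `1` of length one. -/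
def pone : PermPt := ⟨1, 1⟩

/-- A permutation is decomposable if it is the direct sum of two nonempty
permutations, i.e. some proper nonempty initial segment of positions is mapped
to the corresponding initial segment of values. -/
def Decomp {n : ℕ} (σ : Equiv.Perm (Fin n)) : Prop :=
  ∃ m : ℕ, 0 < m ∧ m < n ∧ ∀ i : Fin n, (i : ℕ) < m → (σ i : ℕ) < m

/-- Disconnectedness of a set of permutations under pattern containment:
it splits into two nonempty parts with no comparabilities between them. -/
def Disconn (S : Set PermPt) : Prop :=
  ∃ A B : Set PermPt, A ∪ B = S ∧ A.Nonempty ∧ B.Nonempty ∧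
    ∀ x ∈ A, ∀ y ∈ B, ¬ ple x y ∧ ¬ ple y x
/-- Deleting the letter in position `i` of `τ` and flattening. -/
def deleteAt {n : ℕ} (τ : Equiv.Perm (Fin (n + 1))) (i : Fin (n + 1)) :
    Equiv.Perm (Fin n) :=
  Equiv.removeNone (((finSuccEquiv' i).symm.trans (τ : Fin (n+1) ≃ Fin (n+1))).trans
    (finSuccEquiv' (τ i)))

/-- The positions `lo ≤ k ≤ hi` form a run of `τ`: the values on these positions
are consecutive increasing `a, a+1, …` or consecutive decreasing `a, a-1, …`. -/
def IsRunOn {n : ℕ} (τ : Equiv.Perm (Fin n)) (lo hi : Fin n) : Prop :=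
  lo ≤ hi ∧
  ((∀ k l : Fin n, lo ≤ k → k ≤ l → l ≤ hi →
      (τ l : ℕ) = (τ k : ℕ) + ((l : ℕ) - (k : ℕ))) ∨
   (∀ k l : Fin n, lo ≤ k → k ≤ l → l ≤ hi →
      (τ k : ℕ) = (τ l : ℕ) + ((l : ℕ) - (k : ℕ))))

/-- Positions `i` and `j` lie in a common run of `τ`. -/
def SameRun {n : ℕ} (τ : Equiv.Perm (Fin n)) (i j : Fin n) : Prop :=
  ∃ lo hi : Fin n, IsRunOn τ lo hi ∧ lo ≤ i ∧ i ≤ hi ∧ lo ≤ j ∧ j ≤ hi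

lemma deleteAt_succAbove {m : ℕ} (τ : Equiv.Perm (Fin (m+1))) (i : Fin (m+1)) (k : Fin m) :
    (τ i).succAbove (deleteAt τ i k) = τ (i.succAbove k) := by
  set e := (((finSuccEquiv' i).symm.trans (τ : Fin (m+1) ≃ Fin (m+1))).trans
    (finSuccEquiv' (τ i))) with he
  have hsome : ∃ x', e (some k) = some x' := by
    rcases Option.eq_none_or_eq_some (e (some k)) with h0 | h0
    · exfalso
      have hnone : e none = none := by
        simp [he, Equiv.trans_apply, finSuccEquiv'_at]
      have := e.injective (h0.trans hnone.symm)
      simp at this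
    · exact h0
  have h1 : some (deleteAt τ i k) = e (some k) := Equiv.removeNone_some e hsome
  have h2 : e (some k) = finSuccEquiv' (τ i) (τ (i.succAbove k)) := by
    simp [he, Equiv.trans_apply]
  have h3 := congrArg (finSuccEquiv' (τ i)).symm (h1.trans h2)
  simpa using h3

/-- nat-level flattening -/
def fl (c v : ℕ) : ℕ := if v < c then v else v - 1

lemma coe_deleteAt {m : ℕ} (τ : Equiv.Perm (Fin (m+1))) (i : Fin (m+1)) (k : Fin m) :
    ((deleteAt τ i k : Fin m) : ℕ) = fl (τ i : ℕ) ((τ (i.succAbove k) : ℕ)) := by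
  have h := deleteAt_succAbove τ i k
  set x := deleteAt τ i k with hx
  rcases lt_or_ge (Fin.castSucc x) (τ i) with hc | hc
  · rw [Fin.succAbove_of_castSucc_lt _ _ hc] at h
    have hvx : ((τ (i.succAbove k)) : ℕ) = (x : ℕ) := by rw [← h]; simp
    have : (x : ℕ) < (τ i : ℕ) := by simpa [Fin.lt_def] using hc
    simp [fl, hvx, this]
  · rw [Fin.succAbove_of_le_castSucc _ _ hc] at h
    have hvx : ((τ (i.succAbove k)) : ℕ) = (x : ℕ) + 1 := by rw [← h]; simp
    have : ¬ ((x : ℕ) + 1 < (τ i : ℕ)) := by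
      have : (τ i : ℕ) ≤ (x : ℕ) := by simpa [Fin.le_def] using hc
      omega
    simp [fl, hvx, this]

lemma fl_eq_fl {c w : ℕ} (h1 : w ≠ c) (h2 : w ≠ c + 1) : fl c w = fl (c+1) w := by
  unfold fl; split_ifs with a b b <;> omega

lemma fl_lb (c v : ℕ) : v ≤ fl c v + 1 := by unfold fl; split_ifs <;> omega
lemma fl_ub (c v : ℕ) : fl c v ≤ v := by unfold fl; split_ifs <;> omega

lemma tau_ne {m : ℕ} (τ : Equiv.Perm (Fin m)) {a b : Fin m} (h : a ≠ b) :
    ((τ a : Fin m) : ℕ) ≠ ((τ b) : ℕ) :=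
  fun hc => h (τ.injective (Fin.val_injective hc))

/-- deletions at two adjacent positions whose values are consecutive agree -/
lemma deleteAt_adjacent {n : ℕ} (τ : Equiv.Perm (Fin (n+2))) (p : Fin (n+1))
    (hstep : (τ p.succ : ℕ) = (τ p.castSucc : ℕ) + 1 ∨
             (τ p.castSucc : ℕ) = (τ p.succ : ℕ) + 1) :
    deleteAt τ p.castSucc = deleteAt τ p.succ := by
  apply Equiv.ext
  intro k
  apply Fin.val_injective
  rw [coe_deleteAt, coe_deleteAt]
  rcases lt_trichotomy (k : ℕ) (p : ℕ) with hk | hk | hk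
  · -- both succAbove are castSucc k
    have e1 : p.castSucc.succAbove k = Fin.castSucc k :=
      Fin.succAbove_of_castSucc_lt _ _ (by simp only [Fin.lt_def, Fin.coe_castSucc]; omega)
    have e2 : p.succ.succAbove k = Fin.castSucc k :=
      Fin.succAbove_of_castSucc_lt _ _ (by simp only [Fin.lt_def, Fin.coe_castSucc, Fin.val_succ]; omega)
    rw [e1, e2]
    have hne1 : (τ (Fin.castSucc k) : ℕ) ≠ (τ p.castSucc : ℕ) :=
      tau_ne τ (by simp only [ne_eq, Fin.ext_iff, Fin.coe_castSucc, Fin.val_succ]; omega)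
    have hne2 : (τ (Fin.castSucc k) : ℕ) ≠ (τ p.succ : ℕ) :=
      tau_ne τ (by simp only [ne_eq, Fin.ext_iff, Fin.coe_castSucc, Fin.val_succ]; omega)
    rcases hstep with hs | hs
    · rw [hs]; exact fl_eq_fl hne1 (by omega)
    · rw [hs]; exact (fl_eq_fl hne2 (by omega)).symm
  · -- k = p
    have e1 : p.castSucc.succAbove k = Fin.succ k :=
      Fin.succAbove_of_le_castSucc _ _ (by simp only [Fin.le_def, Fin.coe_castSucc]; omega)
    have e2 : p.succ.succAbove k = Fin.castSucc k :=
      Fin.succAbove_of_castSucc_lt _ _ (by simp only [Fin.lt_def, Fin.coe_castSucc, Fin.val_succ]; omega)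
    have ek1 : (Fin.succ k : Fin (n+2)) = p.succ := by simp only [Fin.ext_iff, Fin.coe_castSucc, Fin.val_succ]; omega
    have ek2 : (Fin.castSucc k : Fin (n+2)) = p.castSucc := by simp only [Fin.ext_iff, Fin.coe_castSucc, Fin.val_succ]; omega
    rw [e1, e2, ek1, ek2]
    rcases hstep with hs | hs <;> rw [hs] <;> unfold fl <;> split_ifs <;> omega
  · -- k > p : both succAbove are succ k
    have e1 : p.castSucc.succAbove k = Fin.succ k :=
      Fin.succAbove_of_le_castSucc _ _ (by simp only [Fin.le_def, Fin.coe_castSucc, Fin.val_succ]; omega)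
    have e2 : p.succ.succAbove k = Fin.succ k :=
      Fin.succAbove_of_le_castSucc _ _ (by simp only [Fin.le_def, Fin.coe_castSucc, Fin.val_succ]; omega)
    rw [e1, e2]
    have hne1 : (τ (Fin.succ k) : ℕ) ≠ (τ p.castSucc : ℕ) :=
      tau_ne τ (by simp only [ne_eq, Fin.ext_iff, Fin.coe_castSucc, Fin.val_succ]; omega)
    have hne2 : (τ (Fin.succ k) : ℕ) ≠ (τ p.succ : ℕ) :=
      tau_ne τ (by simp only [ne_eq, Fin.ext_iff, Fin.coe_castSucc, Fin.val_succ]; omega)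
    rcases hstep with hs | hs
    · rw [hs]; exact fl_eq_fl hne1 (by omega)
    · rw [hs]; exact (fl_eq_fl hne2 (by omega)).symm


/-- along a run, all deletions are equal to the deletion at `lo` -/
lemma deleteAt_eq_of_run {n : ℕ} (τ : Equiv.Perm (Fin (n+2))) (lo hi : Fin (n+2))
    (hrun : IsRunOn τ lo hi) :
    ∀ q : ℕ, (lo : ℕ) ≤ q → ∀ hq : q < n + 2, (q ≤ (hi : ℕ)) →
      deleteAt τ ⟨q, hq⟩ = deleteAt τ lo := by
  intro q hloq
  induction q, hloq using Nat.le_induction with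
  | base =>
    intro hq _
    have : (⟨(lo : ℕ), hq⟩ : Fin (n+2)) = lo := Fin.ext rfl
    rw [this]
  | succ q hloq ih =>
    intro hq hqhi
    have hq' : q < n + 1 := by omega
    set p : Fin (n+1) := ⟨q, hq'⟩ with hp
    have hcs : (Fin.castSucc p : Fin (n+2)) = ⟨q, by omega⟩ := by
      simp [Fin.ext_iff, hp]
    have hsc : (Fin.succ p : Fin (n+2)) = ⟨q+1, hq⟩ := by
      simp [Fin.ext_iff, hp]
    have hstep : (τ p.succ : ℕ) = (τ p.castSucc : ℕ) + 1 ∨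
                 (τ p.castSucc : ℕ) = (τ p.succ : ℕ) + 1 := by
      obtain ⟨hle, hmono | hmono⟩ := hrun
      · left
        have := hmono ⟨q, by omega⟩ ⟨q+1, hq⟩ (by simpa [Fin.le_def] using hloq)
          (by simp [Fin.le_def]) (by simpa [Fin.le_def] using hqhi)
        rw [hcs, hsc]; simpa using this
      · right
        have := hmono ⟨q, by omega⟩ ⟨q+1, hq⟩ (by simpa [Fin.le_def] using hloq)
          (by simp [Fin.le_def]) (by simpa [Fin.le_def] using hqhi)
        rw [hcs, hsc]; simpa using this
    have := deleteAt_adjacent τ p hstep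
    rw [hcs, hsc] at this
    rw [← this]
    exact ih (by omega) (by omega)

lemma sameRun_refl {n : ℕ} (τ : Equiv.Perm (Fin n)) (i : Fin n) : SameRun τ i i := by
  refine ⟨i, i, ⟨le_refl _, Or.inl ?_⟩, le_refl _, le_refl _, le_refl _, le_refl _⟩
  intro k l hk hkl hl
  have : k = l := le_antisymm hkl (hl.trans hk)
  subst this
  omega

lemma deleteAt_eq_of_sameRun {n : ℕ} (τ : Equiv.Perm (Fin (n+2))) (i j : Fin (n+2))
    (h : SameRun τ i j) : deleteAt τ i = deleteAt τ j := by
  obtain ⟨lo, hi, hrun, h1, h2, h3, h4⟩ := h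
  have ei : deleteAt τ i = deleteAt τ lo := by
    have := deleteAt_eq_of_run τ lo hi hrun (i : ℕ) h1 i.isLt h2
    simpa using this
  have ej : deleteAt τ j = deleteAt τ lo := by
    have := deleteAt_eq_of_run τ lo hi hrun (j : ℕ) h3 j.isLt h4
    simpa using this
  rw [ei, ej]

lemma walk_sign (f : ℕ → ℕ) (i j : ℕ) (hij : i < j)
    (hinj : ∀ a b, i ≤ a → a ≤ j → i ≤ b → b ≤ j → f a = f b → a = b)
    (hstep : ∀ q, i ≤ q → q < j → f (q+1) = f q + 1 ∨ f q = f (q+1) + 1) :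
    (∀ q, i ≤ q → q < j → f (q+1) = f q + 1) ∨
    (∀ q, i ≤ q → q < j → f q = f (q+1) + 1) := by
  have key : ∀ d : ℕ, (f (i+1) = f i + 1 → ∀ q, i ≤ q → q ≤ i + d → q < j → f (q+1) = f q + 1)
      ∧ (f i = f (i+1) + 1 → ∀ q, i ≤ q → q ≤ i + d → q < j → f q = f (q+1) + 1) := by
    intro d
    induction d with
    | zero =>
      constructor <;> (intro h0 q hq1 hq2 _; have : q = i := by omega) <;> subst this <;> exact h0
    | succ d ih =>
      constructor <;> intro h0 q hq1 hq2 hq3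
      · by_cases hqd : q ≤ i + d
        · exact ih.1 h0 q hq1 hqd hq3
        · have hq : q = i + d + 1 := by omega
          have hprev : f q = f (q-1) + 1 := by
            have := ih.1 h0 (q-1) (by omega) (by omega) (by omega)
            have hq1' : q - 1 + 1 = q := by omega
            rwa [hq1'] at this
          rcases hstep q hq1 hq3 with h | h
          · exact h
          · exfalso
            have : f (q+1) = f (q-1) := by omega
            have := hinj (q+1) (q-1) (by omega) (by omega) (by omega) (by omega) this
            omega
      · by_cases hqd : q ≤ i + d
        · exact ih.2 h0 q hq1 hqd hq3
        · have hq : q = i + d + 1 := by omega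
          have hprev : f (q-1) = f q + 1 := by
            have := ih.2 h0 (q-1) (by omega) (by omega) (by omega)
            have hq1' : q - 1 + 1 = q := by omega
            rwa [hq1'] at this
          rcases hstep q hq1 hq3 with h | h
          · exfalso
            have : f (q+1) = f (q-1) := by omega
            have := hinj (q+1) (q-1) (by omega) (by omega) (by omega) (by omega) this
            omega
          · exact h
  rcases hstep i (le_refl _) hij with h0 | h0
  · left; intro q hq1 hq2; exact (key (q - i)).1 h0 q hq1 (by omega) hq2
  · right; intro q hq1 hq2; exact (key (q - i)).2 h0 q hq1 (by omega) hq2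

lemma walk_run_up (f : ℕ → ℕ) (i j : ℕ)
    (hstep : ∀ q, i ≤ q → q < j → f (q+1) = f q + 1) :
    ∀ k l, i ≤ k → k ≤ l → l ≤ j → f l = f k + (l - k) := by
  intro k l hk hkl
  induction l, hkl using Nat.le_induction with
  | base => intro _; omega
  | succ l hkl ih =>
    intro hl
    have h1 := ih (by omega)
    have h2 := hstep l (by omega) (by omega)
    omega

lemma walk_run_down (f : ℕ → ℕ) (i j : ℕ)
    (hstep : ∀ q, i ≤ q → q < j → f q = f (q+1) + 1) :
    ∀ k l, i ≤ k → k ≤ l → l ≤ j → f k = f l + (l - k) := by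
  intro k l hk hkl
  induction l, hkl using Nat.le_induction with
  | base => intro _; omega
  | succ l hkl ih =>
    intro hl
    have h1 := ih (by omega)
    have h2 := hstep l (by omega) (by omega)
    omega

lemma sameRun_of_deleteAt_eq_lt {n : ℕ} (τ : Equiv.Perm (Fin (n+2))) (i j : Fin (n+2))
    (hij : i < j) (h : deleteAt τ i = deleteAt τ j) : SameRun τ i j := by
  set f : ℕ → ℕ := fun q => if hq : q < n + 2 then ((τ ⟨q, hq⟩ : Fin (n+2)) : ℕ) else 0 with hf
  have hij' : (i : ℕ) < (j : ℕ) := hij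
  have hinj : ∀ a b, (i:ℕ) ≤ a → a ≤ (j:ℕ) → (i:ℕ) ≤ b → b ≤ (j:ℕ) → f a = f b → a = b := by
    intro a b ha1 ha2 hb1 hb2 hab
    have haa : a < n + 2 := by omega
    have hbb : b < n + 2 := by omega
    rw [hf] at hab
    simp only [haa, hbb, dif_pos] at hab
    have := τ.injective (Fin.val_injective hab)
    simpa [Fin.ext_iff] using this
  have hstep : ∀ q, (i:ℕ) ≤ q → q < (j:ℕ) → f (q+1) = f q + 1 ∨ f q = f (q+1) + 1 := by
    intro q hq1 hq2
    have hq' : q < n + 1 := by omega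
    set p : Fin (n+1) := ⟨q, hq'⟩ with hp
    -- evaluate the deletions at position p
    have hval := congrArg (fun π => ((π p : Fin (n+1)) : ℕ)) h
    rw [coe_deleteAt, coe_deleteAt] at hval
    have e1 : i.succAbove p = Fin.succ p :=
      Fin.succAbove_of_le_castSucc _ _ (by simp only [Fin.le_def, Fin.coe_castSucc]; omega)
    have e2 : j.succAbove p = Fin.castSucc p :=
      Fin.succAbove_of_castSucc_lt _ _ (by simp only [Fin.lt_def, Fin.coe_castSucc]; omega)
    rw [e1, e2] at hval
    have hfq1 : f (q+1) = (τ (Fin.succ p) : ℕ) := by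
      rw [hf]; simp only [show q + 1 < n + 2 by omega, dif_pos]
      exact congrArg (fun x => ((τ x : Fin (n+2)) : ℕ)) (Fin.ext rfl)
    have hfq : f q = (τ (Fin.castSucc p) : ℕ) := by
      rw [hf]; simp only [show q < n + 2 by omega, dif_pos]
      exact congrArg (fun x => ((τ x : Fin (n+2)) : ℕ)) (Fin.ext rfl)
    have hne : (τ (Fin.succ p) : ℕ) ≠ (τ (Fin.castSucc p) : ℕ) :=
      tau_ne τ (by simp only [ne_eq, Fin.ext_iff, Fin.val_succ, Fin.coe_castSucc]; omega)
    have b1 := fl_lb (τ i : ℕ) (τ (Fin.succ p) : ℕ)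
    have b2 := fl_ub (τ i : ℕ) (τ (Fin.succ p) : ℕ)
    have b3 := fl_lb (τ j : ℕ) (τ (Fin.castSucc p) : ℕ)
    have b4 := fl_ub (τ j : ℕ) (τ (Fin.castSucc p) : ℕ)
    rw [hfq1, hfq]
    omega
  have hsign := walk_sign f (i:ℕ) (j:ℕ) hij' hinj hstep
  have hcoe : ∀ (l : Fin (n+2)), f (l : ℕ) = (τ l : ℕ) := by
    intro l
    rw [hf]; simp only [l.isLt, dif_pos]
  refine ⟨i, j, ⟨le_of_lt hij, ?_⟩, le_refl _, le_of_lt hij, le_of_lt hij, le_refl _⟩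
  rcases hsign with hs | hs
  · left
    intro k l hk hkl hl
    have := walk_run_up f (i:ℕ) (j:ℕ) hs (k:ℕ) (l:ℕ) hk hkl hl
    rw [hcoe, hcoe] at this
    exact this
  · right
    intro k l hk hkl hl
    have := walk_run_down f (i:ℕ) (j:ℕ) hs (k:ℕ) (l:ℕ) hk hkl hl
    rw [hcoe, hcoe] at this
    exact this

lemma sameRun_symm {n : ℕ} (τ : Equiv.Perm (Fin n)) {i j : Fin n}
    (h : SameRun τ i j) : SameRun τ j i := by
  obtain ⟨lo, hi, hrun, h1, h2, h3, h4⟩ := h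
  exact ⟨lo, hi, hrun, h3, h4, h1, h2⟩

lemma deleteAt_eq_iff_sameRun {n : ℕ} (τ : Equiv.Perm (Fin (n+2))) (i j : Fin (n+2)) :
    deleteAt τ i = deleteAt τ j ↔ SameRun τ i j := by
  constructor
  · intro h
    rcases lt_trichotomy i j with hij | hij | hij
    · exact sameRun_of_deleteAt_eq_lt τ i j hij h
    · subst hij; exact sameRun_refl τ i
    · exact sameRun_symm τ (sameRun_of_deleteAt_eq_lt τ j i hij h.symm)
  · exact deleteAt_eq_of_sameRun τ i j

lemma ple_fst_le {x y : PermPt} (h : ple x y) : x.1 ≤ y.1 := by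
  obtain ⟨f, hf, -⟩ := h
  simpa using Fintype.card_le_of_injective f hf.injective

lemma perm_eq_of_iff {m : ℕ} (π ρ : Equiv.Perm (Fin m))
    (h : ∀ a b, π a ≤ π b ↔ ρ a ≤ ρ b) : π = ρ := by
  have hg : StrictMono (fun x => ρ (π.symm x)) := by
    intro x y hxy
    have hle : ρ (π.symm x) ≤ ρ (π.symm y) := by
      rw [← h]
      simpa using hxy.le
    have hne : ρ (π.symm x) ≠ ρ (π.symm y) := by
      intro hc
      exact absurd (π.symm.injective (ρ.injective hc)) hxy.ne
    exact lt_of_le_of_ne hle hne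
  have hrange : Set.range (fun x => ρ (π.symm x)) = Set.range (id : Fin m → Fin m) := by
    have h1 : Function.Surjective (fun x => ρ (π.symm x)) :=
      ρ.surjective.comp π.symm.surjective
    rw [Set.range_eq_univ.mpr h1, Set.range_id]
  have hwf : WellFoundedLT (Fin m) := inferInstance
  have := (@StrictMono.range_inj (Fin m) (Fin m) _ _ hwf _ _ hg strictMono_id).1 hrange
  apply Equiv.ext
  intro a
  have := congrFun this (π a)
  simpa using this.symm

lemma ple_deleteAt {m : ℕ} (τ : Equiv.Perm (Fin (m+1))) (i : Fin (m+1)) :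
    ple ⟨m, deleteAt τ i⟩ ⟨m+1, τ⟩ := by
  refine ⟨i.succAbove, Fin.strictMono_succAbove i, fun a b => ?_⟩
  show deleteAt τ i a ≤ deleteAt τ i b ↔ _
  rw [← Fin.succAbove_le_succAbove_iff (p := τ i), deleteAt_succAbove, deleteAt_succAbove]

lemma exists_succAbove_of_strictMono {m : ℕ} (f : Fin (m+1) → Fin (m+2))
    (hf : StrictMono f) : ∃ j : Fin (m+2), f = Fin.succAbove j := by
  have hcard : (Set.range f).ncard = m + 1 := by
    rw [← Set.image_univ, Set.ncard_image_of_injective _ hf.injective, Set.ncard_univ]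
    simp
  have hne : Set.range f ≠ Set.univ := by
    intro hc
    rw [hc, Set.ncard_univ] at hcard
    simp at hcard
  obtain ⟨j, hj⟩ := Set.ne_univ_iff_exists_notMem _ |>.mp hne
  have hsub : Set.range f ⊆ Set.range (Fin.succAbove j) := by
    rw [Fin.range_succAbove]
    intro x hx
    simp only [Set.mem_compl_iff, Set.mem_singleton_iff]
    rintro rfl
    exact hj hx
  have hcard2 : (Set.range (Fin.succAbove j)).ncard = m + 1 := by
    rw [← Set.image_univ, Set.ncard_image_of_injective _ (Fin.succAbove_right_injective),
      Set.ncard_univ]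
    simp
  have heq : Set.range f = Set.range (Fin.succAbove j) :=
    Set.eq_of_subset_of_ncard_le hsub (by omega) (Set.toFinite _)
  have hwf : WellFoundedLT (Fin (m+1)) := inferInstance
  exact ⟨j, (@StrictMono.range_inj (Fin (m+1)) (Fin (m+2)) _ _ hwf _ _ hf
    (Fin.strictMono_succAbove j)).1 heq⟩

lemma eq_deleteAt_of_ple {m : ℕ} (π : Equiv.Perm (Fin (m+1))) (τ : Equiv.Perm (Fin (m+2)))
    (h : ple ⟨m+1, π⟩ ⟨m+2, τ⟩) : ∃ j, π = deleteAt τ j := by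
  obtain ⟨f, hf, hiff⟩ := h
  obtain ⟨j, rfl⟩ := exists_succAbove_of_strictMono f hf
  refine ⟨j, perm_eq_of_iff π (deleteAt τ j) fun a b => ?_⟩
  rw [hiff a b]
  show τ (j.succAbove a) ≤ τ (j.succAbove b) ↔ _
  rw [← deleteAt_succAbove, ← deleteAt_succAbove, Fin.succAbove_le_succAbove_iff]

lemma ncard_image_eq_of_ker {α β γ : Type*} [Nonempty γ] (s : Set α) (f : α → β) (g : α → γ)
    (hker : ∀ a ∈ s, ∀ b ∈ s, (f a = f b ↔ g a = g b)) :
    (f '' s).ncard = (g '' s).ncard := by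
  classical
  set φ : β → γ := fun y => if hy : ∃ a ∈ s, f a = y then g hy.choose else Classical.arbitrary γ
    with hφ
  have hφf : ∀ a ∈ s, φ (f a) = g a := by
    intro a ha
    have hy : ∃ a' ∈ s, f a' = f a := ⟨a, ha, rfl⟩
    rw [hφ]
    simp only [dif_pos hy]
    exact (hker _ hy.choose_spec.1 a ha).mp hy.choose_spec.2
  have himg : g '' s = φ '' (f '' s) := by
    rw [← Set.image_comp]
    apply Set.image_congr
    intro a ha
    exact (hφf a ha).symm
  have hinj : Set.InjOn φ (f '' s) := by
    rintro y1 ⟨a1, ha1, rfl⟩ y2 ⟨a2, ha2, rfl⟩ hy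
    rw [hφf a1 ha1, hφf a2 ha2] at hy
    exact (hker a1 ha1 a2 ha2).mpr hy
  rw [himg, Set.ncard_image_of_injOn hinj]


/-- In an interval `[σ,τ]` of rank 2, the number of elements of rank 1 equals
the number of runs of `τ` consisting entirely of removable letters (runs being
the equivalence classes of the `SameRun` relation). -/
theorem rank_two_interval_count (n : ℕ)
    (σ : Equiv.Perm (Fin n)) (τ : Equiv.Perm (Fin (n + 2)))
    (h : ple ⟨n, σ⟩ ⟨n + 2, τ⟩) :
    Set.ncard {π : Equiv.Perm (Fin (n + 1)) |
        plt ⟨n, σ⟩ ⟨n + 1, π⟩ ∧ plt ⟨n + 1, π⟩ ⟨n + 2, τ⟩} =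
    Set.ncard {C : Set (Fin (n + 2)) | ∃ i : Fin (n + 2),
        C = {j | SameRun τ i j} ∧
        ∀ j ∈ C, ple ⟨n, σ⟩ ⟨n + 1, deleteAt τ j⟩} := by
  classical
  set J : Set (Fin (n+2)) := {i | ple ⟨n, σ⟩ ⟨n+1, deleteAt τ i⟩} with hJ
  -- left set is the image of J under deletion
  have hS1 : {π : Equiv.Perm (Fin (n + 1)) |
      plt ⟨n, σ⟩ ⟨n + 1, π⟩ ∧ plt ⟨n + 1, π⟩ ⟨n + 2, τ⟩} = (fun i => deleteAt τ i) '' J := by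
    ext π
    simp only [Set.mem_setOf_eq, Set.mem_image]
    constructor
    · rintro ⟨⟨h1, -⟩, ⟨h2, -⟩⟩
      obtain ⟨j, rfl⟩ := eq_deleteAt_of_ple π τ h2
      exact ⟨j, h1, rfl⟩
    · rintro ⟨j, hj, rfl⟩
      refine ⟨⟨hj, fun hc => ?_⟩, ⟨ple_deleteAt τ j, fun hc => ?_⟩⟩
      · have := ple_fst_le hc; simp at this
      · have := ple_fst_le hc; simp at this
  -- right set is the image of J under taking run-classes
  have hS2 : {C : Set (Fin (n + 2)) | ∃ i : Fin (n + 2),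
      C = {j | SameRun τ i j} ∧ ∀ j ∈ C, ple ⟨n, σ⟩ ⟨n + 1, deleteAt τ j⟩}
      = (fun i => {j | SameRun τ i j}) '' J := by
    ext C
    simp only [Set.mem_setOf_eq, Set.mem_image]
    constructor
    · rintro ⟨i, rfl, hall⟩
      exact ⟨i, hall i (sameRun_refl τ i), rfl⟩
    · rintro ⟨i, hi, rfl⟩
      refine ⟨i, rfl, fun j hj => ?_⟩
      have : deleteAt τ i = deleteAt τ j := (deleteAt_eq_iff_sameRun τ i j).mpr hj
      rwa [← this]
  rw [hS1, hS2]
  apply ncard_image_eq_of_ker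
  intro a _ b _
  rw [deleteAt_eq_iff_sameRun]
  constructor
  · intro hab
    ext k
    simp only [Set.mem_setOf_eq]
    constructor
    · intro hk
      rw [← deleteAt_eq_iff_sameRun] at hk hab ⊢
      rw [← hab]; exact hk
    · intro hk
      rw [← deleteAt_eq_iff_sameRun] at hk hab ⊢
      rw [hab]; exact hk
  · intro hab
    have : b ∈ {j | SameRun τ a j} := by rw [hab]; exact sameRun_refl τ b
    exact this
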